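/- Let A₁, …, A_m ∈ ℝⁿˣⁿ be symmetric matrices such that 𝒜(X) = (m^{−1/2}·⟨Aᵢ, X⟩)_{1≤i≤m} satisfies the 4-RIP with RIP constant δ₄ ≤ 1/44. Let x⋆ ∈ ℝⁿ with x⋆ ≠ 0, let yᵢ = ⟨Aᵢ, x⋆x⋆ᵀ⟩, and let f(x) = (1/(4m))·Σᵢ (⟨Aᵢ, xxᵀ⟩ − yᵢ)². If ‖x₀ − x⋆‖₂ ≤ ‖x⋆‖₂/12, then the gradient descent iterates x_{t+1} = x_t − η_t·∇f(x_t) with constant step size η_t ≡ 1/(3·‖x⋆‖₂²) satisfy ‖x_t − x⋆‖₂ ≤ (11/12)ᵗ · ‖x₀ − x⋆‖₂ for all t ≥ 0. -/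

import Mathlib

open Matrix

/-- The Euclidean (ℓ₂) norm of a vector in `ℝⁿ`. -/
noncomputable def l2norm {p : ℕ} (v : Fin p → ℝ) : ℝ :=
  Real.sqrt (∑ i, v i ^ 2)

/-- The Frobenius norm of a real matrix. -/
noncomputable def frobNorm {p q : ℕ} (A : Matrix (Fin p) (Fin q) ℝ) : ℝ :=
  Real.sqrt (∑ i, ∑ j, (A i j) ^ 2)

/-- The trace inner product `⟨X, Y⟩ = Tr(XᵀY)` of two real matrices. -/
def mip {p q : ℕ} (A B : Matrix (Fin p) (Fin q) ℝ) : ℝ :=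
  Matrix.trace (Aᵀ * B)

open Finset RealInnerProductSpace

noncomputable def eV {p : ℕ} (v : Fin p → ℝ) : EuclideanSpace ℝ (Fin p) :=
  (WithLp.equiv 2 _).symm v

noncomputable def eM {p q : ℕ} (M : Matrix (Fin p) (Fin q) ℝ) :
    EuclideanSpace ℝ (Fin p × Fin q) :=
  (WithLp.equiv 2 _).symm (fun ij => M ij.1 ij.2)

lemma eV_add {p : ℕ} (u v : Fin p → ℝ) : eV (u + v) = eV u + eV v := rfl
lemma eV_sub {p : ℕ} (u v : Fin p → ℝ) : eV (u - v) = eV u - eV v := rfl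
lemma eV_smul {p : ℕ} (c : ℝ) (v : Fin p → ℝ) : eV (c • v) = c • eV v := rfl
lemma eM_add {p q : ℕ} (M N : Matrix (Fin p) (Fin q) ℝ) : eM (M + N) = eM M + eM N := rfl

lemma l2norm_eq {p : ℕ} (v : Fin p → ℝ) : l2norm v = ‖eV v‖ := by
  rw [EuclideanSpace.norm_eq]
  simp [l2norm, eV, sq_abs]

lemma frobNorm_eq {p q : ℕ} (M : Matrix (Fin p) (Fin q) ℝ) : frobNorm M = ‖eM M‖ := by
  rw [EuclideanSpace.norm_eq]
  simp [frobNorm, eM, sq_abs, Fintype.sum_prod_type]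

lemma inner_eV {p : ℕ} (u v : Fin p → ℝ) : ⟪eV u, eV v⟫ = ∑ i, u i * v i := by
  simp [eV, PiLp.inner_apply, RCLike.inner_apply]
  exact Finset.sum_congr rfl fun i _ => mul_comm _ _

lemma mip_eq {p q : ℕ} (A B : Matrix (Fin p) (Fin q) ℝ) :
    mip A B = ∑ i, ∑ j, A i j * B i j := by
  unfold mip Matrix.trace
  simp [Matrix.mul_apply, Matrix.diag, Matrix.transpose_apply]
  rw [Finset.sum_comm]

lemma l2norm_nonneg {p : ℕ} (v : Fin p → ℝ) : 0 ≤ l2norm v := Real.sqrt_nonneg _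

lemma frobNorm_nonneg {p q : ℕ} (M : Matrix (Fin p) (Fin q) ℝ) : 0 ≤ frobNorm M :=
  Real.sqrt_nonneg _

lemma l2norm_sq {p : ℕ} (v : Fin p → ℝ) : l2norm v ^ 2 = ∑ i, v i ^ 2 :=
  Real.sq_sqrt (by positivity)

lemma frobNorm_sq {p q : ℕ} (M : Matrix (Fin p) (Fin q) ℝ) :
    frobNorm M ^ 2 = ∑ i, ∑ j, M i j ^ 2 :=
  Real.sq_sqrt (by positivity)

lemma mip_add_right {p q : ℕ} (A X Y : Matrix (Fin p) (Fin q) ℝ) :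
    mip A (X + Y) = mip A X + mip A Y := by
  simp [mip_eq, mul_add, Finset.sum_add_distrib]

lemma mip_sub_right {p q : ℕ} (A X Y : Matrix (Fin p) (Fin q) ℝ) :
    mip A (X - Y) = mip A X - mip A Y := by
  simp [mip_eq, mul_sub, Finset.sum_sub_distrib]

lemma mip_smul_right {p q : ℕ} (A X : Matrix (Fin p) (Fin q) ℝ) (c : ℝ) :
    mip A (c • X) = c * mip A X := by
  simp [mip_eq, Finset.mul_sum]
  congr 1; ext i; congr 1; ext j; ring

lemma frobNorm_smul {p q : ℕ} (c : ℝ) (M : Matrix (Fin p) (Fin q) ℝ) :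
    frobNorm (c • M) = |c| * frobNorm M := by
  unfold frobNorm
  rw [← Real.sqrt_sq_eq_abs, ← Real.sqrt_mul (sq_nonneg c), Finset.mul_sum]
  congr 1
  refine Finset.sum_congr rfl fun i _ => ?_
  rw [Finset.mul_sum]
  refine Finset.sum_congr rfl fun j _ => ?_
  simp [Matrix.smul_apply]; ring

lemma frobNorm_vecMulVec {p q : ℕ} (u : Fin p → ℝ) (v : Fin q → ℝ) :
    frobNorm (vecMulVec u v) = l2norm u * l2norm v := by
  unfold frobNorm l2norm
  rw [← Real.sqrt_mul (by positivity), Finset.sum_mul]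
  congr 1
  refine Finset.sum_congr rfl fun i _ => ?_
  rw [Finset.mul_sum]
  refine Finset.sum_congr rfl fun j _ => ?_
  simp [Matrix.vecMulVec_apply]; ring

lemma frobNorm_add_le {p q : ℕ} (M N : Matrix (Fin p) (Fin q) ℝ) :
    frobNorm (M + N) ≤ frobNorm M + frobNorm N := by
  rw [frobNorm_eq, frobNorm_eq, frobNorm_eq, eM_add]
  exact norm_add_le _ _

lemma rank_three {n : ℕ} (p q r p' q' r' : Fin n → ℝ) :
    (vecMulVec p p' + vecMulVec q q' + vecMulVec r r').rank ≤ 3 := by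
  set P : Matrix (Fin n) (Fin 3) ℝ := fun i k => ![p, q, r] k i with hP
  set Q : Matrix (Fin 3) (Fin n) ℝ := fun k j => ![p', q', r'] k j with hQ
  have hfac : vecMulVec p p' + vecMulVec q q' + vecMulVec r r' = P * Q := by
    ext i j
    rw [Matrix.mul_apply]
    simp [Matrix.mul_apply, Fin.sum_univ_three, hP, hQ, Matrix.vecMulVec_apply]
  rw [hfac]
  calc (P * Q).rank ≤ P.rank := Matrix.rank_mul_le_left P Q
    _ ≤ Fintype.card (Fin 3) := Matrix.rank_le_card_width P
    _ = 3 := by simp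

lemma mip_smul_left {p q : ℕ} (A X : Matrix (Fin p) (Fin q) ℝ) (c : ℝ) :
    mip (c • A) X = c * mip A X := by
  simp [mip_eq, Finset.mul_sum]
  congr 1; ext i; congr 1; ext j; ring

lemma frobNorm_eq_zero {p q : ℕ} {M : Matrix (Fin p) (Fin q) ℝ} (h : frobNorm M = 0) :
    M = 0 := by
  rw [frobNorm_eq, norm_eq_zero] at h
  ext i j
  simpa [eM] using congrArg (fun v => v (i, j)) h

lemma frob_parallelogram {p q : ℕ} (X Y : Matrix (Fin p) (Fin q) ℝ) :
    frobNorm (X + Y) ^ 2 + frobNorm (X - Y) ^ 2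
      = 2 * frobNorm X ^ 2 + 2 * frobNorm Y ^ 2 := by
  simp only [frobNorm_sq]
  rw [← Finset.sum_add_distrib, Finset.mul_sum, Finset.mul_sum, ← Finset.sum_add_distrib]
  refine Finset.sum_congr rfl fun i _ => ?_
  rw [← Finset.sum_add_distrib, Finset.mul_sum, Finset.mul_sum, ← Finset.sum_add_distrib]
  refine Finset.sum_congr rfl fun j _ => ?_
  simp [Matrix.add_apply, Matrix.sub_apply]
  ring

lemma frob_polar {p q : ℕ} (X Y : Matrix (Fin p) (Fin q) ℝ) :
    frobNorm (X + Y) ^ 2 - frobNorm (X - Y) ^ 2 = 4 * mip X Y := by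
  simp only [frobNorm_sq, mip_eq]
  rw [← Finset.sum_sub_distrib, Finset.mul_sum]
  refine Finset.sum_congr rfl fun i _ => ?_
  rw [← Finset.sum_sub_distrib, Finset.mul_sum]
  refine Finset.sum_congr rfl fun j _ => ?_
  simp [Matrix.add_apply, Matrix.sub_apply]
  ring

section Cross

variable {n m : ℕ} {A : Fin m → Matrix (Fin n) (Fin n) ℝ} {δ : ℝ}

lemma cross_base
    (hRIP : ∀ X : Matrix (Fin n) (Fin n) ℝ, X.rank ≤ 4 →
      (1 - δ) * frobNorm X ^ 2 ≤ (1 / (m : ℝ)) * ∑ i, (mip (A i) X) ^ 2 ∧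
      (1 / (m : ℝ)) * ∑ i, (mip (A i) X) ^ 2 ≤ (1 + δ) * frobNorm X ^ 2)
    (X Y : Matrix (Fin n) (Fin n) ℝ)
    (h1 : (X + Y).rank ≤ 4) (h2 : (X - Y).rank ≤ 4) :
    |(1 / (m : ℝ)) * (∑ i, mip (A i) X * mip (A i) Y) - mip X Y|
      ≤ δ * (frobNorm X ^ 2 + frobNorm Y ^ 2) / 2 := by
  obtain ⟨l1, u1⟩ := hRIP (X + Y) h1
  obtain ⟨l2, u2⟩ := hRIP (X - Y) h2
  set QP := (1 / (m : ℝ)) * ∑ i, (mip (A i) (X + Y)) ^ 2 with hQP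
  set QM := (1 / (m : ℝ)) * ∑ i, (mip (A i) (X - Y)) ^ 2 with hQM
  set FP := frobNorm (X + Y) ^ 2 with hFP
  set FM := frobNorm (X - Y) ^ 2 with hFM
  have hQ : QP - QM = 4 * ((1 / (m : ℝ)) * ∑ i, mip (A i) X * mip (A i) Y) := by
    rw [hQP, hQM, ← mul_sub, ← Finset.sum_sub_distrib]
    have : ∀ i ∈ Finset.univ, (mip (A i) (X + Y)) ^ 2 - (mip (A i) (X - Y)) ^ 2
        = 4 * (mip (A i) X * mip (A i) Y) := fun i _ => by
      rw [mip_add_right, mip_sub_right]; ring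
    rw [Finset.sum_congr rfl this, ← Finset.mul_sum]
    ring
  have hF : FP - FM = 4 * mip X Y := frob_polar X Y
  have hpar : FP + FM = 2 * frobNorm X ^ 2 + 2 * frobNorm Y ^ 2 := frob_parallelogram X Y
  have b1 : |QP - FP| ≤ δ * FP := abs_le.2 ⟨by linarith, by linarith⟩
  have b2 : |QM - FM| ≤ δ * FM := abs_le.2 ⟨by linarith, by linarith⟩
  have h4 : 4 * ((1 / (m : ℝ)) * (∑ i, mip (A i) X * mip (A i) Y) - mip X Y)
      = (QP - FP) - (QM - FM) := by linarith
  have htri : |(QP - FP) - (QM - FM)| ≤ |QP - FP| + |QM - FM| := abs_sub _ _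
  have habs : |4 * ((1 / (m : ℝ)) * (∑ i, mip (A i) X * mip (A i) Y) - mip X Y)|
      ≤ δ * FP + δ * FM := by rw [h4]; linarith
  rw [abs_mul, abs_of_nonneg (by norm_num : (0:ℝ) ≤ 4)] at habs
  have hmul : δ * FP + δ * FM = δ * (2 * frobNorm X ^ 2 + 2 * frobNorm Y ^ 2) := by
    rw [← mul_add, hpar]
  have := abs_nonneg ((1 / (m : ℝ)) * (∑ i, mip (A i) X * mip (A i) Y) - mip X Y)
  linarith

lemma cross_bound
    (hRIP : ∀ X : Matrix (Fin n) (Fin n) ℝ, X.rank ≤ 4 →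
      (1 - δ) * frobNorm X ^ 2 ≤ (1 / (m : ℝ)) * ∑ i, (mip (A i) X) ^ 2 ∧
      (1 / (m : ℝ)) * ∑ i, (mip (A i) X) ^ 2 ≤ (1 + δ) * frobNorm X ^ 2)
    (X Y : Matrix (Fin n) (Fin n) ℝ)
    (hr : ∀ a b : ℝ, (a • X + b • Y).rank ≤ 4) :
    |(1 / (m : ℝ)) * (∑ i, mip (A i) X * mip (A i) Y) - mip X Y|
      ≤ δ * frobNorm X * frobNorm Y := by
  by_cases hX : frobNorm X = 0
  · have hX0 : X = 0 := frobNorm_eq_zero hX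
    subst hX0
    simp [mip_eq, hX]
  by_cases hY : frobNorm Y = 0
  · have hY0 : Y = 0 := frobNorm_eq_zero hY
    subst hY0
    simp [mip_eq, hY]
  have hXpos : 0 < frobNorm X := lt_of_le_of_ne (frobNorm_nonneg X) (Ne.symm hX)
  have hYpos : 0 < frobNorm Y := lt_of_le_of_ne (frobNorm_nonneg Y) (Ne.symm hY)
  set c := Real.sqrt (frobNorm Y / frobNorm X) with hcdef
  have hcpos : 0 < c := Real.sqrt_pos.2 (div_pos hYpos hXpos)
  have hc2 : c ^ 2 = frobNorm Y / frobNorm X :=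
    Real.sq_sqrt (le_of_lt (div_pos hYpos hXpos))
  have h1 : (c • X + c⁻¹ • Y).rank ≤ 4 := hr c c⁻¹
  have h2 : (c • X - c⁻¹ • Y).rank ≤ 4 := by
    rw [sub_eq_add_neg, ← neg_smul]; exact hr c (-c⁻¹)
  have hbase := cross_base hRIP (c • X) (c⁻¹ • Y) h1 h2
  have hB : (1 / (m : ℝ)) * (∑ i, mip (A i) (c • X) * mip (A i) (c⁻¹ • Y))
      = (1 / (m : ℝ)) * (∑ i, mip (A i) X * mip (A i) Y) := by
    congr 1
    refine Finset.sum_congr rfl fun i _ => ?_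
    rw [mip_smul_right, mip_smul_right]
    field_simp
  have hip : mip (c • X) (c⁻¹ • Y) = mip X Y := by
    rw [mip_smul_left, mip_smul_right]
    field_simp
  have hfX : frobNorm (c • X) = c * frobNorm X := by
    rw [frobNorm_smul, abs_of_pos hcpos]
  have hfY : frobNorm (c⁻¹ • Y) = c⁻¹ * frobNorm Y := by
    rw [frobNorm_smul, abs_of_pos (inv_pos.2 hcpos)]
  rw [hB, hip, hfX, hfY] at hbase
  have hkey : (c * frobNorm X) ^ 2 + (c⁻¹ * frobNorm Y) ^ 2
      = 2 * (frobNorm X * frobNorm Y) := by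
    have hc2' : c ^ 2 * frobNorm X = frobNorm Y := by
      rw [hc2]; field_simp
    have hcne : c ≠ 0 := ne_of_gt hcpos
    field_simp
    nlinarith [hc2']
  rw [hkey] at hbase
  calc |(1 / (m : ℝ)) * (∑ i, mip (A i) X * mip (A i) Y) - mip X Y|
      ≤ δ * (2 * (frobNorm X * frobNorm Y)) / 2 := hbase
    _ = δ * frobNorm X * frobNorm Y := by ring

end Cross

section Step

lemma mip_vmv_right {n : ℕ} (B : Matrix (Fin n) (Fin n) ℝ) (u v : Fin n → ℝ) :
    mip B (vecMulVec u v) = ∑ j, (B.mulVec v) j * u j := by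
  rw [mip_eq]
  refine Finset.sum_congr rfl fun j _ => ?_
  simp only [Matrix.mulVec, dotProduct, Matrix.vecMulVec_apply, Finset.sum_mul]
  exact Finset.sum_congr rfl fun k _ => by ring


lemma arith_XY (s ε δ : ℝ) (hs : 0 < s) (hε0 : 0 ≤ ε) (hεs : ε ≤ s / 12)
    (hδ0 : 0 ≤ δ) (hδ : δ ≤ 1 / 44) :
    (ε ^ 2 * s + (2 * s * ε + ε ^ 2) * ε)
      + δ * (2 * s * ε + ε ^ 2) * (s + ε) ≤ 3 / 4 * s ^ 2 * ε := by
  have hee : ε * ε ≤ s / 12 * ε := mul_le_mul_of_nonneg_right hεs hε0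
  have A1 : ε ^ 2 * s ≤ s / 12 * ε * s := by nlinarith [mul_le_mul_of_nonneg_right hee (le_of_lt hs)]
  have A2a : 2 * s * (ε * ε) ≤ 2 * s * (s / 12 * ε) := by
    apply mul_le_mul_of_nonneg_left hee; positivity
  have A2b : ε * ε * ε ≤ s / 12 * (s / 12 * ε) := by
    have h1 : ε * ε * ε ≤ s / 12 * ε * ε := mul_le_mul_of_nonneg_right hee hε0
    have h2 : s / 12 * ε * ε ≤ s / 12 * (s / 12 * ε) := by
      rw [mul_assoc]
      apply mul_le_mul_of_nonneg_left hee; positivity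
    linarith
  have hb3 : (0:ℝ) ≤ 2 * s * ε + ε ^ 2 := by positivity
  have hb1 : 2 * s * ε + ε ^ 2 ≤ 25 / 12 * s * ε := by nlinarith [hee]
  have hb2 : s + ε ≤ 13 / 12 * s := by linarith
  have c1 : δ * (2 * s * ε + ε ^ 2) ≤ 1 / 44 * (25 / 12 * s * ε) :=
    mul_le_mul hδ hb1 hb3 (by norm_num)
  have c3 : δ * (2 * s * ε + ε ^ 2) * (s + ε) ≤ 1 / 44 * (25 / 12 * s * ε) * (13 / 12 * s) :=
    mul_le_mul c1 hb2 (by positivity) (by positivity)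
  nlinarith [A1, A2a, A2b, c3, mul_pos hs hs]

set_option maxHeartbeats 1000000 in
lemma step_lemma {n m : ℕ}
    (A : Fin m → Matrix (Fin n) (Fin n) ℝ) (δ : ℝ) (hδ0 : 0 ≤ δ) (hδ : δ ≤ 1 / 44)
    (hRIP : ∀ X : Matrix (Fin n) (Fin n) ℝ, X.rank ≤ 4 →
      (1 - δ) * frobNorm X ^ 2 ≤ (1 / (m : ℝ)) * ∑ i, (mip (A i) X) ^ 2 ∧
      (1 / (m : ℝ)) * ∑ i, (mip (A i) X) ^ 2 ≤ (1 + δ) * frobNorm X ^ 2)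
    (xstar : Fin n → ℝ) (hs : 0 < l2norm xstar)
    (xt : Fin n → ℝ) (hx : l2norm (xt - xstar) ≤ l2norm xstar / 12) :
    l2norm ((xt - (1 / (3 * l2norm xstar ^ 2)) •
        ((1 / (m : ℝ)) • ∑ i, mip (A i) (vecMulVec xt xt - vecMulVec xstar xstar) •
          (A i).mulVec xt)) - xstar) ≤ 11 / 12 * l2norm (xt - xstar) := by
  set s := l2norm xstar with hsdef
  set Δ := vecMulVec xt xt - vecMulVec xstar xstar with hΔdef
  set g := (1 / (m : ℝ)) • ∑ i, mip (A i) Δ • (A i).mulVec xt with hgdef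
  set η := 1 / (3 * s ^ 2) with hηdef
  set d := xt - xstar with hddef
  set ε := l2norm d with hεdef
  have hεs : ε ≤ s / 12 := hx
  have hε0 : 0 ≤ ε := l2norm_nonneg d
  have hη : 0 < η := by rw [hηdef]; positivity
  have hdk : ∀ k, xt k = xstar k + d k := fun k => by simp [hddef]
  set a := ∑ k, xstar k * d k with hadef
  set h := Δ.mulVec xt with hhdef
  have hS : ‖eV xstar‖ = s := (l2norm_eq xstar).symm
  have hD : ‖eV d‖ = ε := (l2norm_eq d).symm
  have hinner : ⟪eV xstar, eV d⟫ = a := inner_eV xstar d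
  have hane : |a| ≤ s * ε := by
    rw [← hinner, ← hS, ← hD]; exact abs_real_inner_le_norm _ _
  have hs2 : s ^ 2 = ∑ k, xstar k ^ 2 := l2norm_sq xstar
  have he2 : ε ^ 2 = ∑ k, d k ^ 2 := l2norm_sq d
  -- gradient inner product identity
  have hgu : ∀ u : Fin n → ℝ, ∑ j, g j * u j
      = (1 / (m : ℝ)) * ∑ i, mip (A i) Δ * mip (A i) (vecMulVec u xt) := by
    intro u
    have hgj : ∀ j, g j = (1 / (m : ℝ)) * ∑ i, mip (A i) Δ * ((A i).mulVec xt) j := by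
      intro j
      simp [hgdef, Finset.sum_apply, Pi.smul_apply, smul_eq_mul]
    calc ∑ j, g j * u j
        = ∑ j, ∑ i, (1 / (m : ℝ)) * (mip (A i) Δ * (((A i).mulVec xt) j * u j)) := by
          refine Finset.sum_congr rfl fun j _ => ?_
          rw [hgj, mul_assoc, Finset.sum_mul, Finset.mul_sum]
          exact Finset.sum_congr rfl fun i _ => by ring
      _ = ∑ i, ∑ j, (1 / (m : ℝ)) * (mip (A i) Δ * (((A i).mulVec xt) j * u j)) :=
          Finset.sum_comm
      _ = (1 / (m : ℝ)) * ∑ i, mip (A i) Δ * mip (A i) (vecMulVec u xt) := by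
          rw [Finset.mul_sum]
          refine Finset.sum_congr rfl fun i _ => ?_
          rw [mip_vmv_right, Finset.mul_sum, Finset.mul_sum]
  have hhu : ∀ u : Fin n → ℝ, ∑ j, h j * u j = mip Δ (vecMulVec u xt) := by
    intro u
    rw [mip_vmv_right]
  -- gradient error bound
  have hghb : l2norm (g - h) ≤ δ * frobNorm Δ * l2norm xt := by
    set u := g - h with hudef
    have hrk : ∀ p q : ℝ, ((p : ℝ) • Δ + q • vecMulVec u xt).rank ≤ 4 := by
      intro p q
      have hdecomp : p • Δ + q • vecMulVec u xt
          = vecMulVec (p • xt) xt + vecMulVec (-(p • xstar)) xstar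
            + vecMulVec (q • u) xt := by
        ext i j
        simp [hΔdef, Matrix.vecMulVec_apply, Matrix.add_apply, Matrix.smul_apply,
          Matrix.sub_apply]
        ring
      rw [hdecomp]
      exact le_trans (rank_three _ _ _ _ _ _) (by norm_num)
    have hcb := cross_bound hRIP Δ (vecMulVec u xt) hrk
    have hval : ∑ j, u j * u j
        = (1 / (m : ℝ)) * (∑ i, mip (A i) Δ * mip (A i) (vecMulVec u xt))
          - mip Δ (vecMulVec u xt) := by
      rw [← hgu u, ← hhu u, ← Finset.sum_sub_distrib]
      refine Finset.sum_congr rfl fun j _ => ?_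
      simp [hudef, Pi.sub_apply]
      ring
    have hsq : l2norm u ^ 2 = ∑ j, u j * u j := by
      rw [l2norm_sq]
      exact Finset.sum_congr rfl fun j _ => (sq (u j)) ▸ (pow_two (u j))
    have hkey : l2norm u ^ 2 ≤ δ * frobNorm Δ * (l2norm u * l2norm xt) := by
      calc l2norm u ^ 2 = ∑ j, u j * u j := hsq
        _ ≤ |(1 / (m : ℝ)) * (∑ i, mip (A i) Δ * mip (A i) (vecMulVec u xt))
              - mip Δ (vecMulVec u xt)| := by rw [← hval]; exact le_abs_self _
        _ ≤ δ * frobNorm Δ * frobNorm (vecMulVec u xt) := hcb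
        _ = δ * frobNorm Δ * (l2norm u * l2norm xt) := by rw [frobNorm_vecMulVec]
    rcases eq_or_lt_of_le (l2norm_nonneg u) with h0 | h0
    · rw [← h0]
      have : 0 ≤ δ * frobNorm Δ * l2norm xt := by
        have := frobNorm_nonneg Δ
        have := l2norm_nonneg xt
        positivity
      exact this
    · nlinarith [hkey, h0]
  -- Frobenius norm of Δ
  have hΔb : frobNorm Δ ≤ 2 * s * ε + ε ^ 2 := by
    have hdec : Δ = vecMulVec xstar d + vecMulVec d xstar + vecMulVec d d := by
      ext i j
      simp [hΔdef, Matrix.vecMulVec_apply, Matrix.add_apply, Matrix.sub_apply, hddef,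
        Pi.sub_apply]
      ring
    calc frobNorm Δ
        ≤ frobNorm (vecMulVec xstar d + vecMulVec d xstar) + frobNorm (vecMulVec d d) := by
          rw [hdec]; exact frobNorm_add_le _ _
      _ ≤ frobNorm (vecMulVec xstar d) + frobNorm (vecMulVec d xstar)
            + frobNorm (vecMulVec d d) :=
          add_le_add (frobNorm_add_le _ _) le_rfl
      _ = s * ε + ε * s + ε * ε := by
          rw [frobNorm_vecMulVec, frobNorm_vecMulVec, frobNorm_vecMulVec]
      _ = 2 * s * ε + ε ^ 2 := by ring
  -- decomposition of h
  set p := ∑ k, xt k * xt k with hpdef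
  set q := ∑ k, xstar k * xt k with hqdef
  have hhj : ∀ j, h j = xt j * p - xstar j * q := by
    intro j
    have h1 : h j = ∑ k, Δ j k * xt k := by
      simp [hhdef, Matrix.mulVec, dotProduct]
    rw [h1]
    have h2 : ∀ k ∈ Finset.univ, Δ j k * xt k
        = xt j * (xt k * xt k) - xstar j * (xstar k * xt k) := fun k _ => by
      simp [hΔdef, Matrix.vecMulVec_apply, Matrix.sub_apply]
      ring
    rw [Finset.sum_congr rfl h2, Finset.sum_sub_distrib, ← Finset.mul_sum, ← Finset.mul_sum]
  have hp : p = s ^ 2 + 2 * a + ε ^ 2 := by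
    have h2 : ∀ k ∈ Finset.univ, xt k * xt k
        = xstar k ^ 2 + 2 * (xstar k * d k) + d k ^ 2 := fun k _ => by
      rw [hdk k]; ring
    rw [hpdef, Finset.sum_congr rfl h2, Finset.sum_add_distrib, Finset.sum_add_distrib,
      ← Finset.mul_sum, ← hs2, ← he2, ← hadef]
  have hq : q = s ^ 2 + a := by
    have h2 : ∀ k ∈ Finset.univ, xstar k * xt k
        = xstar k ^ 2 + xstar k * d k := fun k _ => by
      rw [hdk k]; ring
    rw [hqdef, Finset.sum_congr rfl h2, Finset.sum_add_distrib, ← hs2, ← hadef]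
  set lin := s ^ 2 • d + a • xstar with hlindef
  have hsne : s ≠ 0 := ne_of_gt hs
  -- remainder bound
  have hrem : h - lin = (ε ^ 2) • xstar + (2 * a + ε ^ 2) • d := by
    funext j
    simp only [Pi.sub_apply, Pi.add_apply, Pi.smul_apply, smul_eq_mul, hlindef]
    rw [hhj j, hp, hq, hdk j]
    ring
  have hremb : l2norm (h - lin) ≤ ε ^ 2 * s + (2 * s * ε + ε ^ 2) * ε := by
    rw [hrem, l2norm_eq, eV_add, eV_smul, eV_smul]
    calc ‖(ε ^ 2) • eV xstar + (2 * a + ε ^ 2) • eV d‖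
        ≤ ‖(ε ^ 2) • eV xstar‖ + ‖(2 * a + ε ^ 2) • eV d‖ := norm_add_le _ _
      _ = ε ^ 2 * s + |2 * a + ε ^ 2| * ε := by
          rw [norm_smul, norm_smul, Real.norm_eq_abs, Real.norm_eq_abs, hS, hD,
            abs_of_nonneg (sq_nonneg ε)]
      _ ≤ ε ^ 2 * s + (2 * s * ε + ε ^ 2) * ε := by
          have habs : |2 * a + ε ^ 2| ≤ 2 * s * ε + ε ^ 2 := by
            calc |2 * a + ε ^ 2| ≤ |2 * a| + |ε ^ 2| := abs_add_le _ _
              _ = 2 * |a| + ε ^ 2 := by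
                  rw [abs_mul, abs_of_nonneg (by norm_num : (0:ℝ) ≤ 2),
                    abs_of_nonneg (sq_nonneg ε)]
              _ ≤ 2 * (s * ε) + ε ^ 2 := by linarith
              _ = 2 * s * ε + ε ^ 2 := by ring
          exact add_le_add le_rfl (mul_le_mul_of_nonneg_right habs hε0)
  -- contraction of the linear part
  have hcontr : l2norm (d - η • lin) ≤ 2 / 3 * ε := by
    have hfn : d - η • lin = (2 / 3 : ℝ) • d - (a / (3 * s ^ 2)) • xstar := by
      funext j
      simp only [Pi.sub_apply, Pi.smul_apply, Pi.add_apply, smul_eq_mul, hlindef, hηdef]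
      field_simp
      ring
    rw [hfn, l2norm_eq, eV_sub, eV_smul, eV_smul]
    set c := a / (3 * s ^ 2) with hcdef
    have hinner' : ⟪eV d, eV xstar⟫ = a := by
      rw [inner_eV, hadef]
      exact Finset.sum_congr rfl fun k _ => mul_comm _ _
    have hsq : ‖(2 / 3 : ℝ) • eV d - c • eV xstar‖ ^ 2
        = (2 / 3) ^ 2 * ε ^ 2 - 2 * ((2 / 3) * (c * a)) + c ^ 2 * s ^ 2 := by
      rw [norm_sub_sq_real, real_inner_smul_left, real_inner_smul_right, hinner',
        norm_smul, norm_smul, Real.norm_eq_abs, Real.norm_eq_abs, hS, hD]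
      rw [abs_of_nonneg (by norm_num : (0:ℝ) ≤ 2/3)]
      rw [mul_pow, mul_pow, sq_abs]
    have hca : c * a = a ^ 2 / (3 * s ^ 2) := by
      rw [hcdef]; ring
    have hc2s : c ^ 2 * s ^ 2 = a ^ 2 / (9 * s ^ 2) := by
      rw [hcdef]
      field_simp
      ring
    have hca0 : 0 ≤ a ^ 2 / (3 * s ^ 2) := by positivity
    set N := ‖(2 / 3 : ℝ) • eV d - c • eV xstar‖ with hNdef
    have hN0 : (0:ℝ) ≤ N := norm_nonneg _
    have hsqb : N ^ 2 ≤ (2 / 3 * ε) ^ 2 := by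
      rw [hsq, hca, hc2s]
      have h9 : a ^ 2 / (9 * s ^ 2) ≤ a ^ 2 / (3 * s ^ 2) := by
        apply div_le_div_of_nonneg_left (sq_nonneg a) (by positivity)
        nlinarith [sq_nonneg s, hs]
      nlinarith
    nlinarith [hN0, hε0, hsqb]
  -- assembly
  have hxtb : l2norm xt ≤ s + ε := by
    have hxt : xt = xstar + d := by funext j; rw [hdk j]; rfl
    rw [hxt, l2norm_eq, eV_add]
    calc ‖eV xstar + eV d‖ ≤ ‖eV xstar‖ + ‖eV d‖ := norm_add_le _ _
      _ = s + ε := by rw [hS, hD]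
  have hsplit : d - η • g = (d - η • lin) - η • (h - lin) - η • (g - h) := by
    funext j
    simp only [Pi.sub_apply, Pi.smul_apply, Pi.add_apply, smul_eq_mul]
    ring
  have hgoal : (xt - η • g) - xstar = d - η • g := sub_right_comm xt (η • g) xstar
  rw [hgoal, hsplit, l2norm_eq, eV_sub, eV_sub]
  have hterm : ∀ v : Fin n → ℝ, ‖eV (η • v)‖ = η * l2norm v := by
    intro v
    rw [eV_smul, norm_smul, Real.norm_eq_abs, abs_of_pos hη, l2norm_eq]
  have htri : ‖eV (d - η • lin) - eV (η • (h - lin)) - eV (η • (g - h))‖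
      ≤ ‖eV (d - η • lin)‖ + ‖eV (η • (h - lin))‖ + ‖eV (η • (g - h))‖ := by
    calc ‖eV (d - η • lin) - eV (η • (h - lin)) - eV (η • (g - h))‖
        ≤ ‖eV (d - η • lin) - eV (η • (h - lin))‖ + ‖eV (η • (g - h))‖ := norm_sub_le _ _
      _ ≤ ‖eV (d - η • lin)‖ + ‖eV (η • (h - lin))‖ + ‖eV (η • (g - h))‖ :=
          add_le_add (norm_sub_le _ _) le_rfl
  have hcontr' : ‖eV (d - η • lin)‖ ≤ 2 / 3 * ε := by rw [← l2norm_eq]; exact hcontr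
  have hghb' : l2norm (g - h) ≤ δ * (2 * s * ε + ε ^ 2) * (s + ε) := by
    calc l2norm (g - h) ≤ δ * frobNorm Δ * l2norm xt := hghb
      _ ≤ δ * (2 * s * ε + ε ^ 2) * (s + ε) := by
          have h1 : δ * frobNorm Δ ≤ δ * (2 * s * ε + ε ^ 2) :=
            mul_le_mul_of_nonneg_left hΔb hδ0
          have h2 : 0 ≤ δ * frobNorm Δ := mul_nonneg hδ0 (frobNorm_nonneg Δ)
          have h3 : 0 ≤ l2norm xt := l2norm_nonneg xt
          nlinarith [hxtb]
  have hfinal : 2 / 3 * ε + η * (ε ^ 2 * s + (2 * s * ε + ε ^ 2) * ε)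
      + η * (δ * (2 * s * ε + ε ^ 2) * (s + ε)) ≤ 11 / 12 * ε := by
    have h3s : (0:ℝ) < 3 * s ^ 2 := by positivity
    have hXY : (ε ^ 2 * s + (2 * s * ε + ε ^ 2) * ε)
        + δ * (2 * s * ε + ε ^ 2) * (s + ε) ≤ 3 / 4 * s ^ 2 * ε :=
      arith_XY s ε δ hs hε0 hεs hδ0 hδ
    have hdiv : η * ((ε ^ 2 * s + (2 * s * ε + ε ^ 2) * ε)
        + δ * (2 * s * ε + ε ^ 2) * (s + ε)) ≤ η * (3 / 4 * s ^ 2 * ε) :=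
      mul_le_mul_of_nonneg_left hXY (le_of_lt hη)
    have hηval : η * (3 / 4 * s ^ 2 * ε) = ε / 4 := by
      rw [hηdef]
      field_simp
    have hfin2 : η * (ε ^ 2 * s + (2 * s * ε + ε ^ 2) * ε)
        + η * (δ * (2 * s * ε + ε ^ 2) * (s + ε)) ≤ ε / 4 := by
      rw [← hηval]
      calc η * (ε ^ 2 * s + (2 * s * ε + ε ^ 2) * ε)
            + η * (δ * (2 * s * ε + ε ^ 2) * (s + ε))
          = η * ((ε ^ 2 * s + (2 * s * ε + ε ^ 2) * ε)
            + δ * (2 * s * ε + ε ^ 2) * (s + ε)) := by ring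
        _ ≤ η * (3 / 4 * s ^ 2 * ε) := hdiv
    linarith
  calc ‖eV (d - η • lin) - eV (η • (h - lin)) - eV (η • (g - h))‖
      ≤ ‖eV (d - η • lin)‖ + ‖eV (η • (h - lin))‖ + ‖eV (η • (g - h))‖ := htri
    _ ≤ 2 / 3 * ε + η * (ε ^ 2 * s + (2 * s * ε + ε ^ 2) * ε)
        + η * (δ * (2 * s * ε + ε ^ 2) * (s + ε)) := by
        have t2 : ‖eV (η • (h - lin))‖ ≤ η * (ε ^ 2 * s + (2 * s * ε + ε ^ 2) * ε) := by
          rw [hterm]; exact mul_le_mul_of_nonneg_left hremb (le_of_lt hη)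
        have t3 : ‖eV (η • (g - h))‖ ≤ η * (δ * (2 * s * ε + ε ^ 2) * (s + ε)) := by
          rw [hterm]; exact mul_le_mul_of_nonneg_left hghb' (le_of_lt hη)
        linarith [hcontr', t2, t3]
    _ ≤ 11 / 12 * ε := hfinal

end Step

/-- **Local linear convergence of gradient descent for rank-1 matrix sensing.**
Suppose the symmetric sensing matrices `Aᵢ` induce an operator
`𝒜(X) = (m^{-1/2}⟨Aᵢ, X⟩)ᵢ` satisfying the `4`-RIP with constant `δ₄ ≤ 1/44`, let
`yᵢ = ⟨Aᵢ, x⋆x⋆ᵀ⟩` and `f(x) = (1/4m) ∑ᵢ (⟨Aᵢ, xxᵀ⟩ − yᵢ)²` whose gradient is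
`∇f(x) = (1/m) ∑ᵢ ⟨Aᵢ, xxᵀ − x⋆x⋆ᵀ⟩ Aᵢx`. If `‖x₀ − x⋆‖₂ ≤ ‖x⋆‖₂/12`, then gradient
descent with constant step size `1/(3‖x⋆‖₂²)` satisfies
`‖x_t − x⋆‖₂ ≤ (11/12)ᵗ ‖x₀ − x⋆‖₂` for all `t ≥ 0`. -/
theorem gd_rank_one_matrix_sensing_convergence
    (n m : ℕ)
    (A : Fin m → Matrix (Fin n) (Fin n) ℝ)
    (hsym : ∀ i, (A i)ᵀ = A i)
    (δ : ℝ) (hδ : δ ≤ 1 / 44)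
    (hRIP : ∀ X : Matrix (Fin n) (Fin n) ℝ, X.rank ≤ 4 →
      (1 - δ) * frobNorm X ^ 2 ≤ (1 / (m : ℝ)) * ∑ i, (mip (A i) X) ^ 2 ∧
      (1 / (m : ℝ)) * ∑ i, (mip (A i) X) ^ 2 ≤ (1 + δ) * frobNorm X ^ 2)
    (xstar : Fin n → ℝ) (hxstar : xstar ≠ 0)
    (x : ℕ → (Fin n → ℝ))
    (hinit : l2norm (x 0 - xstar) ≤ l2norm xstar / 12)
    (hupd : ∀ t : ℕ, x (t + 1) =
      x t - (1 / (3 * l2norm xstar ^ 2)) •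
        ((1 / (m : ℝ)) • ∑ i,
          mip (A i) (Matrix.vecMulVec (x t) (x t) - Matrix.vecMulVec xstar xstar) •
            Matrix.mulVec (A i) (x t))) :
    ∀ t : ℕ, l2norm (x t - xstar) ≤ (11 / 12) ^ t * l2norm (x 0 - xstar) := by
  -- positivity of ‖x⋆‖
  have hs : 0 < l2norm xstar := by
    obtain ⟨i, hi⟩ := Function.ne_iff.1 hxstar
    apply Real.sqrt_pos.2
    apply Finset.sum_pos' (fun k _ => sq_nonneg _)
    exact ⟨i, Finset.mem_univ i, pow_pos (abs_pos.2 hi) 2 |> fun h => by rwa [sq_abs] at h⟩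
  -- nonnegativity of δ
  have hδ0 : 0 ≤ δ := by
    have hrk : (vecMulVec xstar xstar).rank ≤ 4 := by
      have hdec : vecMulVec xstar xstar
          = vecMulVec xstar xstar + vecMulVec (0 : Fin n → ℝ) 0 + vecMulVec 0 0 := by
        ext i j; simp [Matrix.vecMulVec_apply]
      rw [hdec]
      exact le_trans (rank_three _ _ _ _ _ _) (by norm_num)
    obtain ⟨hl, hu⟩ := hRIP (vecMulVec xstar xstar) hrk
    have hF : frobNorm (vecMulVec xstar xstar) = l2norm xstar * l2norm xstar :=
      frobNorm_vecMulVec xstar xstar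
    have hFpos : 0 < frobNorm (vecMulVec xstar xstar) ^ 2 := by
      rw [hF]; positivity
    nlinarith [hl, hu, hFpos]
  have hone : ∀ t : ℕ, ((11:ℝ) / 12) ^ t ≤ 1 :=
    fun t => pow_le_one₀ (by norm_num) (by norm_num)
  have hinit0 : 0 ≤ l2norm (x 0 - xstar) := l2norm_nonneg _
  intro t
  induction t with
  | zero => simp
  | succ t ih =>
    have hxt : l2norm (x t - xstar) ≤ l2norm xstar / 12 := by
      calc l2norm (x t - xstar) ≤ (11 / 12) ^ t * l2norm (x 0 - xstar) := ih
        _ ≤ 1 * l2norm (x 0 - xstar) := mul_le_mul_of_nonneg_right (hone t) hinit0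
        _ = l2norm (x 0 - xstar) := one_mul _
        _ ≤ l2norm xstar / 12 := hinit
    have hstep := step_lemma A δ hδ0 hδ hRIP xstar hs (x t) hxt
    rw [← hupd t] at hstep
    calc l2norm (x (t + 1) - xstar) ≤ 11 / 12 * l2norm (x t - xstar) := hstep
      _ ≤ 11 / 12 * ((11 / 12) ^ t * l2norm (x 0 - xstar)) := by
          apply mul_le_mul_of_nonneg_left ih; norm_num
      _ = (11 / 12) ^ (t + 1) * l2norm (x 0 - xstar) := by ring
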